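/- The probability that a uniformly random permutation of n elements has all cycle lengths at most r equals exp(Σ_{j=1}^r 1/j) · P(Σ_{j=1}^r j·Z_j = n), where Z_1, …, Z_r are independent Poisson random variables with E[Z_j] = 1/j. -/

import Mathlib

open MeasureTheory ProbabilityTheory
open scoped NNReal Classical

set_option maxHeartbeats 1000000

namespace Stmt11

open Finset Equiv Equiv.Perm Real


/-- Weight function: `(1/(i+1))^k / k!`. -/
noncomputable def w (i k : ℕ) : ℝ := ((i : ℝ) + 1)⁻¹ ^ k / (Nat.factorial k)

lemma w_pos (i k : ℕ) : 0 < w i k := by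
  unfold w
  positivity

/-- Solution vectors. -/
noncomputable def SS (r n : ℕ) : Finset (Fin r → ℕ) :=
  (Fintype.piFinset fun _ => Finset.range (n+1)).filter
    (fun s => ∑ i : Fin r, ((i : ℕ) + 1) * s i = n)

lemma mem_SS {r n : ℕ} {s : Fin r → ℕ} :
    s ∈ SS r n ↔ ∑ i : Fin r, ((i : ℕ) + 1) * s i = n := by
  simp only [SS, Finset.mem_filter, Fintype.mem_piFinset, Finset.mem_range]
  constructor
  · exact fun h => h.2
  · intro h
    refine ⟨fun i => ?_, h⟩
    have h1 : s i ≤ ((i : ℕ) + 1) * s i := Nat.le_mul_of_pos_left _ (Nat.succ_pos _)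
    have h2 : ((i : ℕ) + 1) * s i ≤ n := by
      rw [← h]
      exact Finset.single_le_sum (f := fun j : Fin r => ((j : ℕ) + 1) * s j)
        (fun j _ => Nat.zero_le _) (Finset.mem_univ i)
    omega

/-- The Poisson-side sum. -/
noncomputable def Q (r n : ℕ) : ℝ := ∑ s ∈ SS r n, ∏ i : Fin r, w i (s i)

lemma Q_zero (r : ℕ) : Q r 0 = 1 := by
  have h : SS r 0 = {fun _ => 0} := by
    ext s
    simp only [mem_SS, Finset.mem_singleton]
    constructor
    · intro h
      funext i
      have h2 := Finset.sum_eq_zero_iff.mp h i (Finset.mem_univ i)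
      simpa using h2
    · rintro rfl; simp
  simp [Q, h, w]

lemma w_succ_mul (i k : ℕ) : (((i:ℕ):ℝ) + 1) * (k + 1) * w i (k+1) = w i k := by
  unfold w
  have hi : ((i:ℝ) + 1) ≠ 0 := by positivity
  have hk : ((k:ℝ) + 1) ≠ 0 := by positivity
  rw [Nat.factorial_succ, pow_succ]
  push_cast
  field_simp

lemma sum_update_nat {r : ℕ} (s : Fin r → ℕ) (i : Fin r) (m : ℕ) :
    ∑ k : Fin r, ((k : ℕ) + 1) * (Function.update s i m k)
      = ((i : ℕ) + 1) * m + ∑ k ∈ Finset.univ.erase i, ((k : ℕ) + 1) * s k := by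
  rw [← Finset.add_sum_erase _ _ (Finset.mem_univ i)]
  simp only [Function.update_self]
  congr 1
  exact Finset.sum_congr rfl fun k hk => by
    rw [Function.update_of_ne (Finset.ne_of_mem_erase hk)]

lemma prod_update_w {r : ℕ} (s : Fin r → ℕ) (i : Fin r) (m : ℕ) :
    ∏ k : Fin r, w k (Function.update s i m k)
      = w i m * ∏ k ∈ Finset.univ.erase i, w k (s k) := by
  rw [← Finset.mul_prod_erase _ _ (Finset.mem_univ i)]
  simp only [Function.update_self]
  congr 1
  exact Finset.prod_congr rfl fun k hk => by
    rw [Function.update_of_ne (Finset.ne_of_mem_erase hk)]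

lemma Q_rec (r n : ℕ) (hn : 1 ≤ n) :
    (n : ℝ) * Q r n = ∑ j ∈ Finset.Icc 1 (min r n), Q r (n - j) := by
  have key : ∀ i : Fin r,
      (∑ s ∈ SS r n, ((((i : ℕ) : ℝ) + 1) * (s i)) * ∏ k : Fin r, w k (s k))
        = if (i : ℕ) + 1 ≤ n then Q r (n - ((i : ℕ) + 1)) else 0 := by
    intro i
    have hfil : ∑ s ∈ (SS r n).filter (fun s => s i ≠ 0),
        ((((i : ℕ) : ℝ) + 1) * (s i)) * ∏ k : Fin r, w k (s k)
        = ∑ s ∈ SS r n, ((((i : ℕ) : ℝ) + 1) * (s i)) * ∏ k : Fin r, w k (s k) := by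
      apply Finset.sum_filter_of_ne
      intro s _ hne
      intro h0
      apply hne
      rw [h0]
      simp
    rw [← hfil]
    by_cases hin : (i : ℕ) + 1 ≤ n
    · rw [if_pos hin]
      unfold Q
      refine Finset.sum_nbij' (fun s => Function.update s i (s i - 1))
        (fun t => Function.update t i (t i + 1)) ?_ ?_ ?_ ?_ ?_
      · intro s hs
        simp only [Finset.mem_filter, mem_SS] at hs
        rw [mem_SS, sum_update_nat]
        obtain ⟨h1, h2⟩ := hs
        obtain ⟨m, hm⟩ : ∃ m, s i = m + 1 := ⟨s i - 1, by omega⟩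
        have h3 : ∑ k : Fin r, ((k : ℕ) + 1) * s k
            = ((i : ℕ) + 1) * s i + ∑ k ∈ Finset.univ.erase i, ((k : ℕ) + 1) * s k := by
          rw [← Finset.add_sum_erase _ _ (Finset.mem_univ i)]
        rw [hm] at h3
        rw [hm, Nat.add_sub_cancel]
        rw [Nat.mul_succ] at h3
        omega
      · intro t ht
        rw [mem_SS] at ht
        simp only [Finset.mem_filter, mem_SS, sum_update_nat]
        have h3 : ∑ k : Fin r, ((k : ℕ) + 1) * t k
            = ((i : ℕ) + 1) * t i + ∑ k ∈ Finset.univ.erase i, ((k : ℕ) + 1) * t k := by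
          rw [← Finset.add_sum_erase _ _ (Finset.mem_univ i)]
        rw [Nat.mul_succ]
        rw [ht] at h3
        constructor
        · omega
        · simp [Function.update_self]
      · intro s hs
        simp only [Finset.mem_filter] at hs
        funext k
        rcases eq_or_ne k i with rfl | hk
        · simp only [Function.update_self]
          have := hs.2
          omega
        · simp [Function.update_of_ne hk]
      · intro t _
        funext k
        rcases eq_or_ne k i with rfl | hk
        · simp [Function.update_self]
        · simp [Function.update_of_ne hk]
      · intro s hs
        simp only [Finset.mem_filter] at hs
        rw [prod_update_w]
        have h5 : ∏ k : Fin r, w k (s k)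
            = w i (s i) * ∏ k ∈ Finset.univ.erase i, w k (s k) :=
          (Finset.mul_prod_erase _ _ (Finset.mem_univ i)).symm
        rw [h5]
        obtain ⟨m, hm⟩ : ∃ m, s i = m + 1 := ⟨s i - 1, by omega⟩
        rw [hm, Nat.add_sub_cancel]
        have hw := w_succ_mul (i : ℕ) m
        push_cast at hw ⊢
        calc ((i : ℝ) + 1) * ((m : ℝ) + 1) * (w i (m+1) * ∏ k ∈ Finset.univ.erase i, w k (s k))
            = (((i : ℝ) + 1) * ((m : ℝ) + 1) * w i (m+1)) * ∏ k ∈ Finset.univ.erase i, w k (s k) := by ring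
          _ = w i m * ∏ k ∈ Finset.univ.erase i, w k (s k) := by rw [hw]
    · simp only [if_neg hin]
      apply Finset.sum_eq_zero
      intro s hs
      exfalso
      simp only [Finset.mem_filter, mem_SS] at hs
      obtain ⟨h1, h2⟩ := hs
      have h3 : ((i : ℕ) + 1) * s i ≤ n := by
        rw [← h1]
        exact Finset.single_le_sum (f := fun k : Fin r => ((k : ℕ) + 1) * s k)
          (fun k _ => Nat.zero_le _) (Finset.mem_univ i)
      have : 1 ≤ s i := Nat.one_le_iff_ne_zero.mpr h2
      nlinarith [this, h3, hin]
  -- main computation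
  have lhs_eq : (n : ℝ) * Q r n
      = ∑ i : Fin r, ∑ s ∈ SS r n, ((((i : ℕ) : ℝ) + 1) * (s i)) * ∏ k : Fin r, w k (s k) := by
    rw [Finset.sum_comm]
    unfold Q
    rw [Finset.mul_sum]
    apply Finset.sum_congr rfl
    intro s hs
    rw [mem_SS] at hs
    rw [← Finset.sum_mul]
    congr 1
    rw [← hs]
    push_cast
    ring
  rw [lhs_eq]
  rw [Finset.sum_congr rfl (fun i _ => key i)]
  rw [Fin.sum_univ_eq_sum_range (fun i => if i + 1 ≤ n then Q r (n - (i + 1)) else 0) r]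
  rw [← Finset.sum_filter]
  refine Finset.sum_nbij' (fun i => i + 1) (fun j => j - 1) ?_ ?_ ?_ ?_ ?_
  · intro i hi
    simp only [Finset.mem_filter, Finset.mem_range] at hi
    simp only [Finset.mem_Icc, le_min_iff]
    omega
  · intro j hj
    simp only [Finset.mem_Icc, le_min_iff] at hj
    simp only [Finset.mem_filter, Finset.mem_range]
    omega
  · intro i hi
    show i + 1 - 1 = i
    omega
  · intro j hj
    simp only [Finset.mem_Icc, le_min_iff] at hj
    show j - 1 + 1 = j
    omega
  · intro i _
    rfl
lemma prob_eq (n r : ℕ)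
    {Ω : Type*} [MeasurableSpace Ω] (μ : Measure Ω) [IsProbabilityMeasure μ]
    (Z : Fin r → Ω → ℕ)
    (hmeas : ∀ i, Measurable (Z i))
    (hindep : iIndepFun Z μ)
    (hdist : ∀ i : Fin r, μ.map (Z i) = poissonMeasure (((i : ℕ) + 1 : ℝ≥0)⁻¹)) :
    (μ {ω | ∑ i : Fin r, ((i : ℕ) + 1) * Z i ω = n}).toReal
      = Real.exp (-∑ i : Fin r, (1 : ℝ) / ((i : ℕ) + 1)) * Q r n := by
  -- single preimage measure
  have hsingle : ∀ (i : Fin r) (k : ℕ),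
      μ (Z i ⁻¹' {k}) = ENNReal.ofReal (Real.exp (-(((i:ℕ):ℝ)+1)⁻¹) * w i k) := by
    intro i k
    have h1 : μ (Z i ⁻¹' {k}) = μ.map (Z i) {k} := by
      rw [Measure.map_apply (hmeas i) (measurableSet_singleton k)]
    rw [h1, hdist i]
    have h2 : poissonMeasure (((i : ℕ) + 1 : ℝ≥0)⁻¹) {k}
        = poissonPMF (((i : ℕ) + 1 : ℝ≥0)⁻¹) k :=
      by rw [poissonMeasure_singleton]; rfl
    rw [h2]
    have h3 : ((((i : ℕ) + 1 : ℝ≥0)⁻¹ : ℝ≥0) : ℝ) = (((i:ℕ):ℝ)+1)⁻¹ := by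
      push_cast
      simp
    show ENNReal.ofReal (poissonPMFReal _ k) = _
    unfold poissonPMFReal w
    rw [h3]
    congr 1
    rw [mul_div_assoc]
  -- event decomposition
  have hdecomp : {ω | ∑ i : Fin r, ((i : ℕ) + 1) * Z i ω = n}
      = ⋃ s ∈ SS r n, ⋂ i : Fin r, Z i ⁻¹' {s i} := by
    ext ω
    simp only [Set.mem_setOf_eq, Set.mem_iUnion, Set.mem_iInter, Set.mem_preimage,
      Set.mem_singleton_iff]
    constructor
    · intro h
      exact ⟨fun i => Z i ω, mem_SS.mpr h, fun i => rfl⟩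
    · rintro ⟨s, hs, hz⟩
      rw [← mem_SS.mp hs]
      exact Finset.sum_congr rfl fun i _ => by rw [hz i]
  rw [hdecomp]
  rw [measure_biUnion_finset ?disj ?meas]
  case meas =>
    intro s _
    exact MeasurableSet.iInter fun i => (hmeas i) (measurableSet_singleton _)
  case disj =>
    intro s hs t ht hst
    obtain ⟨i, hi⟩ : ∃ i, s i ≠ t i := by
      by_contra h
      push_neg at h
      exact hst (funext h)
    rw [Function.onFun]
    rw [Set.disjoint_left]
    intro ω hω hω'
    simp only [Set.mem_iInter, Set.mem_preimage, Set.mem_singleton_iff] at hω hω'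
    exact hi ((hω i).symm.trans (hω' i))
  -- each intersection via independence
  have hprod : ∀ s : Fin r → ℕ,
      μ (⋂ i : Fin r, Z i ⁻¹' {s i}) = ∏ i : Fin r, μ (Z i ⁻¹' {s i}) := by
    intro s
    have := (iIndepFun_iff_measure_inter_preimage_eq_mul.mp hindep) Finset.univ
      (sets := fun i => {s i}) (fun i _ => measurableSet_singleton _)
    rw [← this]
    congr 1
    ext ω
    simp
  -- compute
  have hterm : ∀ s : Fin r → ℕ,
      μ (⋂ i : Fin r, Z i ⁻¹' {s i})
        = ENNReal.ofReal (Real.exp (-∑ i : Fin r, (1 : ℝ) / ((i : ℕ) + 1))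
            * ∏ i : Fin r, w i (s i)) := by
    intro s
    rw [hprod s]
    rw [Finset.prod_congr rfl (fun i _ => hsingle i (s i))]
    rw [← ENNReal.ofReal_prod_of_nonneg]
    · congr 1
      rw [Finset.prod_mul_distrib, ← Real.exp_sum]
      congr 2
      rw [← Finset.sum_neg_distrib]
      apply Finset.sum_congr rfl
      intro i _
      rw [one_div]
    · intro i _
      exact mul_nonneg (Real.exp_pos _).le (w_pos _ _).le
  rw [Finset.sum_congr rfl (fun s _ => hterm s)]
  rw [← ENNReal.ofReal_sum_of_nonneg]
  · rw [ENNReal.toReal_ofReal]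
    · rw [← Finset.mul_sum]
      rfl
    · apply Finset.sum_nonneg
      intro s _
      have : 0 < ∏ i : Fin r, w i (s i) := Finset.prod_pos fun i _ => w_pos i (s i)
      positivity
  · intro s _
    have : 0 < ∏ i : Fin r, w i (s i) := Finset.prod_pos fun i _ => w_pos i (s i)
    positivity
set_option maxHeartbeats 2000000 in
lemma card_cycles {α : Type*} [Fintype α] [DecidableEq α] (x₀ : α) (j : ℕ) (hj : 2 ≤ j) :
    (Finset.univ.filter (fun c : Equiv.Perm α =>
        c.IsCycle ∧ x₀ ∈ c.support ∧ c.support.card = j)).card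
      = (Fintype.card α - 1).descFactorial (j - 1) := by
  have hcard : Fintype.card (Fin (j-1) ↪ {y : α // y ≠ x₀})
      = (Fintype.card α - 1).descFactorial (j - 1) := by
    rw [Fintype.card_embedding_eq, Fintype.card_fin]
    congr 1
    rw [Fintype.card_subtype_compl, Fintype.card_subtype_eq]
  rw [← hcard, ← Finset.card_univ]
  -- facts about toList for members
  have key : ∀ c : Equiv.Perm α, c.IsCycle → x₀ ∈ c.support → c.support.card = j →
      (c.toList x₀).length = j ∧ (∀ (k : ℕ) (hk : k < (c.toList x₀).length),
        (c.toList x₀).get ⟨k, hk⟩ = (c ^ k) x₀) := by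
    intro c hc hx hcard'
    have hne : c x₀ ≠ x₀ := Equiv.Perm.mem_support.mp hx
    have hlen : (c.toList x₀).length = j := by
      rw [Equiv.Perm.length_toList, hc.cycleOf_eq hne, hcard']
    exact ⟨hlen, fun k hk => Equiv.Perm.getElem_toList (p := c) (x := x₀) k hk⟩
  refine Finset.card_bij' (fun c hc => ?_) (fun f _ => ?_) ?_ ?_ ?_ ?_
  · -- forward map
    exact ⟨fun i => ⟨(c ^ ((i : ℕ) + 1)) x₀, by
      simp only [Finset.mem_filter, Finset.mem_univ, true_and] at hc
      obtain ⟨h1, h2, h3⟩ := hc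
      obtain ⟨hlen, hget⟩ := key c h1 h2 h3
      intro heq
      have h0 : (c.toList x₀).get ⟨0, by omega⟩ = x₀ := by
        rw [hget 0 (by omega)]; simp
      have hi1 : (c.toList x₀).get ⟨(i : ℕ) + 1, by omega⟩ = (c ^ ((i : ℕ) + 1)) x₀ :=
        hget _ _
      have hinj := List.nodup_iff_injective_get.mp (Equiv.Perm.nodup_toList c x₀)
      have := hinj (hi1.trans (heq.trans h0.symm))
      simp at this⟩, by
      -- injectivity
      intro a b hab
      simp only [Finset.mem_filter, Finset.mem_univ, true_and] at hc
      obtain ⟨h1, h2, h3⟩ := hc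
      obtain ⟨hlen, hget⟩ := key c h1 h2 h3
      simp only [Subtype.mk.injEq] at hab
      have ha : (c.toList x₀).get ⟨(a : ℕ) + 1, by omega⟩ = (c ^ ((a : ℕ) + 1)) x₀ := hget _ _
      have hb : (c.toList x₀).get ⟨(b : ℕ) + 1, by omega⟩ = (c ^ ((b : ℕ) + 1)) x₀ := hget _ _
      have hinj := List.nodup_iff_injective_get.mp (Equiv.Perm.nodup_toList c x₀)
      have := hinj (ha.trans (hab.trans hb.symm))
      simp only [Fin.mk.injEq, Nat.add_right_cancel_iff] at this
      exact Fin.ext this⟩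
  · -- inverse map
    exact List.formPerm (x₀ :: List.ofFn (fun i => ((f i : {y : α // y ≠ x₀}) : α)))
  · intro c hc
    exact Finset.mem_univ _
  · -- inverse lands in filter
    intro f _
    set v : Fin (j-1) → α := fun i => ((f i : {y : α // y ≠ x₀}) : α) with hv
    set l : List α := x₀ :: List.ofFn v with hl
    have hnodup : l.Nodup := by
      rw [hl, List.nodup_cons]
      constructor
      · intro hmem
        rw [List.mem_ofFn] at hmem
        obtain ⟨i, hi⟩ := hmem
        exact (f i).2 hi
      · rw [List.nodup_ofFn]
        intro a b hab
        exact f.injective (Subtype.ext hab)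
    have hlen : l.length = j := by
      rw [hl]
      simp only [List.length_cons, List.length_ofFn]
      omega
    have h2len : 2 ≤ l.length := by omega
    have hns : ∀ x : α, l ≠ [x] := by
      intro x hx
      rw [hx] at h2len
      simp at h2len
    have hcy := List.isCycle_formPerm hnodup h2len
    have hsupp := List.support_formPerm_of_nodup l hnodup hns
    simp only [Finset.mem_filter, Finset.mem_univ, true_and]
    refine ⟨hcy, ?_, ?_⟩
    · rw [hsupp, List.mem_toFinset, hl]
      exact List.mem_cons_self
    · rw [hsupp, List.toFinset_card_of_nodup hnodup, hlen]
  · -- left inverse : g (f_c) = c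
    intro c hc
    simp only [Finset.mem_filter, Finset.mem_univ, true_and] at hc
    obtain ⟨h1, h2, h3⟩ := hc
    obtain ⟨hlen, hget⟩ := key c h1 h2 h3
    have hne : c x₀ ≠ x₀ := Equiv.Perm.mem_support.mp h2
    have hlist : x₀ :: List.ofFn (fun i : Fin (j-1) => (c ^ ((i : ℕ) + 1)) x₀)
        = c.toList x₀ := by
      apply List.ext_get
      · simp only [List.length_cons, List.length_ofFn, hlen]
        omega
      · intro k h₁ h₂
        match k with
        | 0 =>
          rw [hget 0 (by omega)]
          simp
        | Nat.succ m =>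
          simp only [List.get_cons_succ]
          rw [hget (m+1) (by omega)]
          have hm : m < j - 1 := by
            simp only [List.length_cons, List.length_ofFn] at h₁
            omega
          simp [List.get_ofFn]
    show (x₀ :: List.ofFn fun i : Fin (j-1) => (c ^ ((i : ℕ) + 1)) x₀).formPerm = c
    rw [hlist, Equiv.Perm.formPerm_toList, h1.cycleOf_eq hne]
  · -- right inverse : f_(g f) = f
    intro f _
    ext i
    set v : Fin (j-1) → α := fun i => ((f i : {y : α // y ≠ x₀}) : α) with hv
    set l : List α := x₀ :: List.ofFn v with hl
    have hnodup : l.Nodup := by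
      rw [hl, List.nodup_cons]
      refine ⟨fun hmem => ?_, List.nodup_ofFn.mpr fun a b hab => f.injective (Subtype.ext hab)⟩
      rw [List.mem_ofFn] at hmem
      obtain ⟨i', hi'⟩ := hmem
      exact (f i').2 hi'
    have hlen : l.length = j := by
      simp only [hl, List.length_cons, List.length_ofFn]
      omega
    have h0 : l.get ⟨0, by omega⟩ = x₀ := rfl
    have hpow : (List.formPerm l ^ ((i : ℕ) + 1)) x₀ = l.get ⟨(i : ℕ) + 1, by omega⟩ := by
      conv_lhs => rw [← h0]
      rw [show l.get ⟨0, by omega⟩ = l[0] from rfl, List.formPerm_pow_apply_getElem l hnodup,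
        List.get_eq_getElem]
      have hidx : (0 + ((i : ℕ) + 1)) % l.length = (i : ℕ) + 1 := by
        rw [hlen, Nat.mod_eq_of_lt (by omega)]
        omega
      simp only [hidx]
    show ((List.formPerm l ^ ((i : ℕ) + 1)) x₀ : α) = (f i : α)
    rw [hpow]
    have : l.get ⟨(i : ℕ) + 1, by omega⟩ = v i := by
      simp [hl, List.get_ofFn]
    rw [this]
lemma fiber_card {α : Type*} [Fintype α] [DecidableEq α] (r : ℕ) (x₀ : α) (c : Equiv.Perm α)
    (hc : c = 1 ∨ (c.IsCycle ∧ x₀ ∈ c.support)) (hcr : c.support.card ≤ r) :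
    (Finset.univ.filter (fun σ : Equiv.Perm α =>
        (∀ m ∈ σ.cycleType, m ≤ r) ∧ σ.cycleOf x₀ = c)).card
      = (Finset.univ.filter (fun τ : Equiv.Perm
          {y : α // y ∉ (if c = 1 then ({x₀} : Finset α) else c.support)} =>
          (∀ m ∈ τ.cycleType, m ≤ r))).card := by
  set t : Finset α := if c = 1 then ({x₀} : Finset α) else c.support with ht
  have hx₀t : x₀ ∈ t := by
    rcases hc with h1 | ⟨hcy, hx⟩
    · simp [ht, h1]
    · have : c ≠ 1 := hcy.ne_one
      simp only [ht, if_neg this]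
      exact hx
  have hsuppt : c.support ⊆ t := by
    rcases eq_or_ne c 1 with h1 | h1
    · simp [h1]
    · simp [ht, if_neg h1]
  -- membership invariance for fiber elements
  have hmem : ∀ σ : Equiv.Perm α, σ.cycleOf x₀ = c → ∀ x : α, (x ∉ t) ↔ (σ x ∉ t) := by
    intro σ hσc x
    have hiff : σ x ∈ t ↔ x ∈ t := by
      rcases eq_or_ne c 1 with h1 | h1
      · have hfix : σ x₀ = x₀ := (cycleOf_eq_one_iff σ).mp (by rw [hσc, h1])
        simp only [ht, if_pos h1, Finset.mem_singleton]
        constructor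
        · intro h; apply σ.injective; rw [h, hfix]
        · intro h; rw [h, hfix]
      · rw [ht, if_neg h1, ← hσc]
        rw [mem_support_cycleOf_iff, mem_support_cycleOf_iff, sameCycle_apply_right]
    exact not_congr hiff.symm
  -- decomposition
  have hdecomp : ∀ (σ : Equiv.Perm α) (hσc : σ.cycleOf x₀ = c),
      σ = c * ofSubtype (σ.subtypePerm (p := fun y => y ∉ t) (fun x => (hmem σ hσc x).symm)) := by
    intro σ hσc
    ext x
    by_cases hx : x ∈ t
    · have h1 : ofSubtype (σ.subtypePerm (p := fun y => y ∉ t) (fun x => (hmem σ hσc x).symm)) x = x :=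
        ofSubtype_apply_of_not_mem _ (by simpa using hx)
      simp only [Equiv.Perm.mul_apply, h1]
      rcases eq_or_ne c 1 with hc1 | hc1
      · have hfix : σ x₀ = x₀ := (cycleOf_eq_one_iff σ).mp (by rw [hσc, hc1])
        have : x = x₀ := by simpa [ht, hc1] using hx
        rw [this, hc1]
        simp [hfix]
      · have hx' : x ∈ (σ.cycleOf x₀).support := by
          rw [hσc]
          simpa [ht, hc1] using hx
        have hsc : σ.SameCycle x₀ x := (mem_support_cycleOf_iff.mp hx').1
        rw [← hσc]
        exact (hsc.cycleOf_apply).symm ▸ rfl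
    · have h1 : ofSubtype (σ.subtypePerm (p := fun y => y ∉ t) (fun x => (hmem σ hσc x).symm)) x = σ x := by
        rw [ofSubtype_apply_of_mem _ (by simpa using hx)]
        rfl
      simp only [Equiv.Perm.mul_apply, h1]
      have hσx : σ x ∉ t := (hmem σ hσc x).mp hx
      have : σ x ∉ c.support := fun h => hσx (hsuppt h)
      exact (notMem_support.mp this).symm
  -- disjointness for reconstruction
  have hdisj : ∀ τ : Equiv.Perm {y : α // y ∉ t}, c.Disjoint (ofSubtype τ) := by
    intro τ
    rw [disjoint_iff_disjoint_support, Finset.disjoint_left]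
    intro a ha hamem
    rw [support_ofSubtype, Finset.mem_map] at hamem
    obtain ⟨⟨y, hy⟩, _, rfl⟩ := hamem
    exact hy (hsuppt ha)
  have hcycleTypec : ∀ m ∈ c.cycleType, m ≤ r := by
    intro m hm
    rcases eq_or_ne c 1 with h1 | h1
    · rw [h1, cycleType_one] at hm
      simp at hm
    · rcases hc with hc1 | ⟨hcy, _⟩
      · exact absurd hc1 h1
      · rw [hcy.cycleType] at hm
        simp only [Multiset.coe_singleton, Multiset.mem_singleton] at hm
        omega
  refine Finset.card_bij'
    (fun σ hσ => σ.subtypePerm (p := fun y => y ∉ t) (fun x => (hmem σ (by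
      simp only [Finset.mem_filter, Finset.mem_univ, true_and] at hσ; exact hσ.2) x).symm))
    (fun τ _ => c * ofSubtype τ) ?_ ?_ ?_ ?_
  · -- forward lands in good
    intro σ hσ
    simp only [Finset.mem_filter, Finset.mem_univ, true_and] at hσ ⊢
    obtain ⟨hgood, hσc⟩ := hσ
    intro m hm
    apply hgood
    rw [hdecomp σ hσc, Equiv.Perm.Disjoint.cycleType_mul (hdisj _), cycleType_ofSubtype]
    exact Multiset.mem_add.mpr (Or.inr hm)
  · -- backward lands in fiber
    intro τ hτ
    simp only [Finset.mem_filter, Finset.mem_univ, true_and] at hτ ⊢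
    constructor
    · intro m hm
      rw [Equiv.Perm.Disjoint.cycleType_mul (hdisj τ), cycleType_ofSubtype, Multiset.mem_add] at hm
      rcases hm with hm | hm
      · exact hcycleTypec m hm
      · exact hτ m hm
    · rw [Equiv.Perm.Disjoint.cycleOf_mul_distrib (hdisj τ)]
      have h1 : (ofSubtype τ).cycleOf x₀ = 1 := by
        rw [cycleOf_eq_one_iff]
        exact ofSubtype_apply_of_not_mem _ (by simpa using hx₀t)
      have h2 : c.cycleOf x₀ = c := by
        rcases eq_or_ne c 1 with hc1 | hc1
        · rw [hc1]; exact cycleOf_one x₀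
        · rcases hc with hc' | ⟨hcy, hx⟩
          · exact absurd hc' hc1
          · exact hcy.cycleOf_eq (mem_support.mp hx)
      rw [h1, h2, mul_one]
  · -- left inverse
    intro σ hσ
    have hσc : σ.cycleOf x₀ = c := by
      simp only [Finset.mem_filter, Finset.mem_univ, true_and] at hσ
      exact hσ.2
    exact (hdecomp σ hσc).symm
  · -- right inverse
    intro τ hτ
    ext ⟨x, hx⟩
    simp only [subtypePerm_apply]
    have h1 : ofSubtype τ x = τ ⟨x, hx⟩ := ofSubtype_apply_of_mem τ hx
    have h2 : ((τ ⟨x, hx⟩ : {y : α // y ∉ t}) : α) ∉ c.support :=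
      fun h => (τ ⟨x, hx⟩).2 (hsuppt h)
    simp only [Equiv.Perm.coe_mul, Function.comp_apply, h1]
    exact notMem_support.mp h2
lemma countA (r : ℕ) (hr : 1 ≤ r) :
    ∀ (n : ℕ) (α : Type) [Fintype α] [DecidableEq α], Fintype.card α = n →
    ((Finset.univ.filter (fun σ : Equiv.Perm α => ∀ m ∈ σ.cycleType, m ≤ r)).card : ℝ)
      = (Nat.factorial n : ℝ) * Q r n := by
  intro n
  induction n using Nat.strong_induction_on with
  | _ n IH =>
  intro α _ _ hn
  rcases Nat.eq_zero_or_pos n with rfl | hpos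
  · -- base case
    have hall : ∀ σ : Equiv.Perm α, ∀ m ∈ σ.cycleType, m ≤ r := by
      intro σ m hm
      have h1 : m ≤ σ.cycleType.sum :=
        Multiset.single_le_sum (fun x _ => Nat.zero_le x) m hm
      have h2 : σ.cycleType.sum = σ.support.card := σ.sum_cycleType
      have h3 : σ.support.card ≤ Fintype.card α := by
        rw [← Finset.card_univ]
        exact Finset.card_le_card (Finset.subset_univ _)
      omega
    rw [Finset.filter_true_of_mem (fun σ _ => hall σ), Finset.card_univ, Fintype.card_perm, hn,
      Q_zero]
    simp
  · -- inductive step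
    obtain ⟨x₀⟩ : Nonempty α := Fintype.card_pos_iff.mp (hn ▸ hpos)
    set G : Finset (Equiv.Perm α) :=
      Finset.univ.filter (fun σ => ∀ m ∈ σ.cycleType, m ≤ r) with hG
    set C : Finset (Equiv.Perm α) :=
      Finset.univ.filter (fun c =>
        (c = 1 ∨ (c.IsCycle ∧ x₀ ∈ c.support)) ∧ c.support.card ≤ r) with hC
    set jsize : Equiv.Perm α → ℕ := fun c => if c = 1 then 1 else c.support.card with hjsize
    have hmapsC : ∀ σ ∈ G, σ.cycleOf x₀ ∈ C := by
      intro σ hσ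
      rw [hG, Finset.mem_filter] at hσ
      obtain ⟨-, hgood⟩ := hσ
      by_cases hfix : σ x₀ = x₀
      · rw [(cycleOf_eq_one_iff σ).mpr hfix]
        rw [hC, Finset.mem_filter]
        refine ⟨Finset.mem_univ _, Or.inl rfl, ?_⟩
        simp
      · have hcy := isCycle_cycleOf σ hfix
        have hx : x₀ ∈ (σ.cycleOf x₀).support :=
          mem_support_cycleOf_iff.mpr ⟨Equiv.Perm.SameCycle.refl σ x₀, mem_support.mpr hfix⟩
        have hmemct : (σ.cycleOf x₀).support.card ∈ σ.cycleType := by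
          rw [cycleType_def]
          exact Multiset.mem_map.mpr ⟨σ.cycleOf x₀,
            Finset.mem_val.mpr (cycleOf_mem_cycleFactorsFinset_iff.mpr (mem_support.mpr hfix)),
            rfl⟩
        rw [hC, Finset.mem_filter]
        exact ⟨Finset.mem_univ _, Or.inr ⟨hcy, hx⟩, hgood _ hmemct⟩
    have stepA : G.card = ∑ c ∈ C, (G.filter (fun σ => σ.cycleOf x₀ = c)).card :=
      Finset.card_eq_sum_card_fiberwise hmapsC
    have stepB : ∀ c ∈ C, ((G.filter (fun σ => σ.cycleOf x₀ = c)).card : ℝ)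
        = (Nat.factorial (n - jsize c) : ℝ) * Q r (n - jsize c) := by
      intro c hcC
      rw [hC, Finset.mem_filter] at hcC
      obtain ⟨-, hor, hcr⟩ := hcC
      have h1 : G.filter (fun σ => σ.cycleOf x₀ = c)
          = Finset.univ.filter (fun σ : Equiv.Perm α =>
              (∀ m ∈ σ.cycleType, m ≤ r) ∧ σ.cycleOf x₀ = c) := by
        rw [hG, Finset.filter_filter]
      rw [h1, fiber_card r x₀ c hor hcr]
      have hjge : 1 ≤ jsize c := by
        simp only [hjsize]
        rcases eq_or_ne c 1 with h | h
        · simp [h]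
        · rw [if_neg h]
          rcases hor with h' | ⟨hcy, _⟩
          · exact absurd h' h
          · have := hcy.two_le_card_support
            omega
      have hjle : jsize c ≤ n := by
        simp only [hjsize]
        rcases eq_or_ne c 1 with h | h
        · simp [h]; omega
        · rw [if_neg h, ← hn, ← Finset.card_univ]
          exact Finset.card_le_card (Finset.subset_univ _)
      have e1 : Fintype.card {y : α // y ∈ (if c = 1 then ({x₀} : Finset α) else c.support)}
          = jsize c := by
        rw [Fintype.card_coe]
        simp only [hjsize]
        rcases eq_or_ne c 1 with h | h
        · simp [h]
        · rw [if_neg h, if_neg h]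
      have hcard : Fintype.card {y : α // y ∉ (if c = 1 then ({x₀} : Finset α) else c.support)}
          = n - jsize c := by
        rw [Fintype.card_subtype_compl, e1, hn]
      exact IH (n - jsize c) (by omega) _ hcard
    have hmapsJ : ∀ c ∈ C, jsize c ∈ Finset.Icc 1 (min r n) := by
      intro c hcC
      rw [hC, Finset.mem_filter] at hcC
      obtain ⟨-, hor, hcr⟩ := hcC
      rw [Finset.mem_Icc, le_min_iff]
      rcases eq_or_ne c 1 with h | h
      · simp only [hjsize, h, if_pos]
        omega
      · simp only [hjsize, if_neg h]
        rcases hor with h' | ⟨hcy, _⟩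
        · exact absurd h' h
        · have h2 := hcy.two_le_card_support
          have h3 : c.support.card ≤ n := by
            rw [← hn, ← Finset.card_univ]
            exact Finset.card_le_card (Finset.subset_univ _)
          omega
    have stepD : ∀ j ∈ Finset.Icc 1 (min r n),
        (C.filter (fun c => jsize c = j)).card = (n - 1).descFactorial (j - 1) := by
      intro j hj
      rw [Finset.mem_Icc, le_min_iff] at hj
      obtain ⟨hj1, hjr, hjn⟩ := hj
      rcases eq_or_lt_of_le hj1 with h1 | h2
      · -- j = 1
        have : C.filter (fun c => jsize c = 1) = {1} := by
          apply Finset.eq_singleton_iff_unique_mem.mpr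
          constructor
          · rw [Finset.mem_filter, hC, Finset.mem_filter]
            refine ⟨⟨Finset.mem_univ _, Or.inl rfl, ?_⟩, ?_⟩
            · simp
            · simp [hjsize]
          · intro c hc
            rw [Finset.mem_filter, hC, Finset.mem_filter] at hc
            obtain ⟨⟨-, hor, -⟩, hj'⟩ := hc
            by_contra hne
            simp only [hjsize, if_neg hne] at hj'
            rcases hor with h' | ⟨hcy, _⟩
            · exact hne h'
            · have := hcy.two_le_card_support
              omega
        rw [← h1, this]
        simp
      · -- j ≥ 2
        have hset : C.filter (fun c => jsize c = j)
            = Finset.univ.filter (fun c : Equiv.Perm α =>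
                c.IsCycle ∧ x₀ ∈ c.support ∧ c.support.card = j) := by
          ext c
          rw [Finset.mem_filter, hC, Finset.mem_filter, Finset.mem_filter]
          constructor
          · rintro ⟨⟨-, hor, hcr⟩, hj'⟩
            have hne : c ≠ 1 := by
              intro h
              simp only [hjsize, h, if_pos] at hj'
              omega
            simp only [hjsize, if_neg hne] at hj'
            rcases hor with h' | ⟨hcy, hx⟩
            · exact absurd h' hne
            · exact ⟨Finset.mem_univ _, hcy, hx, hj'⟩
          · rintro ⟨-, hcy, hx, hcard⟩
            have hne : c ≠ 1 := hcy.ne_one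
            refine ⟨⟨Finset.mem_univ _, Or.inr ⟨hcy, hx⟩, by omega⟩, ?_⟩
            simp only [hjsize, if_neg hne]
            exact hcard
        rw [hset, card_cycles x₀ j h2, hn]
    -- put together
    have main : (G.card : ℝ)
        = ∑ j ∈ Finset.Icc 1 (min r n), ((n - 1).descFactorial (j - 1) : ℝ)
            * ((Nat.factorial (n - j) : ℝ) * Q r (n - j)) := by
      rw [stepA]
      push_cast
      rw [Finset.sum_congr rfl stepB]
      rw [← Finset.sum_fiberwise_of_maps_to hmapsJ
        (fun c => (Nat.factorial (n - jsize c) : ℝ) * Q r (n - jsize c))]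
      apply Finset.sum_congr rfl
      intro j hj
      rw [← stepD j hj]
      have hconst : ∀ c ∈ C.filter (fun c => jsize c = j),
          ((Nat.factorial (n - jsize c) : ℝ) * Q r (n - jsize c))
            = (Nat.factorial (n - j) : ℝ) * Q r (n - j) := by
        intro c hc
        rw [Finset.mem_filter] at hc
        rw [hc.2]
      rw [Finset.sum_congr rfl hconst, Finset.sum_const, nsmul_eq_mul]
    rw [main]
    have hfac : ∀ j ∈ Finset.Icc 1 (min r n),
        ((n - 1).descFactorial (j - 1) : ℝ) * ((Nat.factorial (n - j) : ℝ) * Q r (n - j))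
          = (Nat.factorial (n - 1) : ℝ) * Q r (n - j) := by
      intro j hj
      rw [Finset.mem_Icc, le_min_iff] at hj
      obtain ⟨hj1, hjr, hjn⟩ := hj
      have hnat : Nat.factorial (n - j) * (n - 1).descFactorial (j - 1)
          = Nat.factorial (n - 1) := by
        have := Nat.factorial_mul_descFactorial (n := n - 1) (k := j - 1) (by omega)
        have heq : n - 1 - (j - 1) = n - j := by omega
        rw [heq] at this
        exact this
      calc ((n - 1).descFactorial (j - 1) : ℝ) * ((Nat.factorial (n - j) : ℝ) * Q r (n - j))
          = ((Nat.factorial (n - j) * (n - 1).descFactorial (j - 1) : ℕ) : ℝ) * Q r (n - j) := by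
            push_cast; ring
        _ = (Nat.factorial (n - 1) : ℝ) * Q r (n - j) := by rw [hnat]
    rw [Finset.sum_congr rfl hfac, ← Finset.mul_sum, ← Q_rec r n hpos]
    have : (Nat.factorial n : ℝ) = (Nat.factorial (n - 1) : ℝ) * n := by
      have := Nat.mul_factorial_pred hpos.ne'
      calc (Nat.factorial n : ℝ) = ((n * Nat.factorial (n - 1) : ℕ) : ℝ) := by rw [this]
        _ = (Nat.factorial (n - 1) : ℝ) * n := by push_cast; ring
    rw [this]
    ring

end Stmt11

theorem stmt_11 (n r : ℕ) (hr : 1 ≤ r) (hrn : r ≤ n)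
    {Ω : Type*} [MeasurableSpace Ω] (μ : Measure Ω) [IsProbabilityMeasure μ]
    (Z : Fin r → Ω → ℕ)
    (hmeas : ∀ i, Measurable (Z i))
    (hindep : iIndepFun Z μ)
    (hdist : ∀ i : Fin r, μ.map (Z i) = poissonMeasure (((i : ℕ) + 1 : ℝ≥0)⁻¹)) :
    ((Finset.filter (fun σ : Equiv.Perm (Fin n) => ∀ c ∈ σ.cycleType, c ≤ r)
        Finset.univ).card : ℝ) / (Nat.factorial n : ℝ) =
      Real.exp (∑ i : Fin r, (1 : ℝ) / ((i : ℕ) + 1)) *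
        (μ {ω | ∑ i : Fin r, ((i : ℕ) + 1) * Z i ω = n}).toReal := by
  have hL := Stmt11.countA r hr n (Fin n) (Fintype.card_fin n)
  have hR := Stmt11.prob_eq n r μ Z hmeas hindep hdist
  rw [hR, hL]
  have hfac : (Nat.factorial n : ℝ) ≠ 0 := by
    exact_mod_cast (Nat.factorial_pos n).ne'
  rw [← mul_assoc, ← Real.exp_add, add_neg_cancel, Real.exp_zero, one_mul, mul_comm,
    mul_div_assoc, div_self hfac, mul_one]
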